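/- arXiv:2505.12436 — 2 statements merged into one kernel-verified Lean document; each statement's English description precedes it below -/
import Mathlib

section
/- Let T₁ and T₂ be compatible TTSBs, and let r ∈ S₁ and s ∈ S₂ with r ♥ s. Then the state r‖s of T₁‖T₂ is committed if and only if r is committed or s is committed: Comm(r‖s) ⟺ Comm(r) ∨ Comm(s). -/
open Classical

noncomputable section

namespace TTSBpaper

/-! ### Partial functions / valuations -/

/-- The domain of a partial function. -/
def dom {α β : Type*} (f : α → Option β) : Set α := {x | f x ≠ none}

/-- The override operator. -/
def override {α β : Type*} (f g : α → Option β) : α → Option β :=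
  fun x => if x ∈ dom f then f x else g x

/-- Restriction of a partial function to a set. -/
def restrictV {α β : Type*} (f : α → Option β) (X : Set α) : α → Option β :=
  fun x => if x ∈ X then f x else none

/-- Compatibility of partial functions. -/
def compatV {α β : Type*} (f g : α → Option β) : Prop :=
  ∀ x ∈ dom f ∩ dom g, f x = g x

/-- Update of f according to g. -/
def updV {α β : Type*} (f g : α → Option β) : α → Option β :=
  restrictV (override g f) (dom f)

/-- A property P (a set of valuations over V) does not depend on the variables in W. -/
def indep {α β : Type*} (V W : Set α) (P : Set (α → Option β)) : Prop :=
  ∀ v u, dom v = V → dom u = W → (v ∈ P ↔ updV v u ∈ P)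

variable {Var Data BCh CCh : Type}

/-- Values: nonnegative reals for clocks, plus arbitrary data. -/
abbrev Value (Data : Type) : Type := NNReal ⊕ Data

/-- Valuations over a universal set of variables, as partial functions. -/
abbrev Valn (Var Data : Type) : Type := Var → Option (Value Data)

/-- Singleton valuation. -/
def single (x : Var) (v : Value Data) : Valn Var Data :=
  fun y => if y = x then some v else none

/-- Time shift v ⊕ d : all clocks (variables in X) advance by d. -/
def oplus (X : Set Var) (v : Valn Var Data) (d : NNReal) : Valn Var Data :=
  fun y => if y ∈ X then (v y).map (Sum.map (fun r => r + d) id) else v y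

/-- A property is left-closed w.r.t. time passage. -/
def leftClosed (X : Set Var) (P : Set (Valn Var Data)) : Prop :=
  ∀ v d, oplus X v d ∈ P → v ∈ P

/-! ### Actions -/

/-- Actions: broadcast output/input, binary output/input, internal, and time passage. -/
inductive Act (BCh CCh : Type) : Type where
  | bsend : BCh → Act BCh CCh
  | brecv : BCh → Act BCh CCh
  | send : CCh → Act BCh CCh
  | recv : CCh → Act BCh CCh
  | tau : Act BCh CCh
  | delay : NNReal → Act BCh CCh

/-- Binary actions. -/
def Act.isBinary : Act BCh CCh → Prop
  | .send _ => True
  | .recv _ => True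
  | _ => False

/-- Binary or broadcast actions. -/
def Act.isSync : Act BCh CCh → Prop
  | .send _ => True
  | .recv _ => True
  | .bsend _ => True
  | .brecv _ => True
  | _ => False

/-- Actions removed by restriction to channel sets Cb, Cc. -/
def Act.removedBy (Cb : Set BCh) (Cc : Set CCh) : Act BCh CCh → Prop
  | .brecv d => d ∈ Cb
  | .send c => c ∈ Cc
  | .recv c => c ∈ Cc
  | _ => False

/-- Actions whose label is kept unchanged by restriction to channel sets Cb, Cc. -/
def Act.keptBy (Cb : Set BCh) (Cc : Set CCh) : Act BCh CCh → Prop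
  | .bsend d => d ∉ Cb
  | .brecv d => d ∉ Cb
  | .send c => c ∉ Cc
  | .recv c => c ∉ Cc
  | _ => True

/-! ### Timed transition systems with broadcast actions -/

/-- The data of a TTSB: external/internal variables, states, initial state and
committed (`true`) / uncommitted (`false`) transition relations. -/
structure PreTTSB (Var Data BCh CCh : Type) : Type where
  E : Set Var
  H : Set Var
  S : Set (Valn Var Data)
  init : Valn Var Data
  Tr : Bool → Valn Var Data → Act BCh CCh → Valn Var Data → Prop

/-- The variables of a TTSB. -/
def PreTTSB.V (T : PreTTSB Var Data BCh CCh) : Set Var := T.E ∪ T.H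

/-- A state is committed iff some committed transition starts in it. -/
def PreTTSB.Comm (T : PreTTSB Var Data BCh CCh) (s : Valn Var Data) : Prop :=
  ∃ a t, T.Tr true s a t

/-- `T` is a timed transition system with broadcast actions (with clock set `X`):
well-formedness plus Axioms I–VI of the paper. -/
structure IsTTSB (X : Set Var) (T : PreTTSB Var Data BCh CCh) : Prop where
  disjEH : Disjoint T.E T.H
  statesDom : ∀ s ∈ T.S, dom s = T.V
  initMem : T.init ∈ T.S
  trMem : ∀ {b s a t}, T.Tr b s a t → s ∈ T.S ∧ t ∈ T.S
  trDisj : ∀ s a t, ¬ (T.Tr true s a t ∧ T.Tr false s a t)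
  axI : ∀ {s a t b a' t'}, T.Tr true s a t → T.Tr b s a' t' →
      a'.isSync ∨ (a' = Act.tau ∧ b = true)
  axII : ∀ {s} (u : Valn Var Data), s ∈ T.S → dom u = T.E → updV s u ∈ T.S
  axIIIc : ∀ {b s t} (u : Valn Var Data) (c : CCh), dom u = T.E →
      T.Tr b s (Act.recv c) t → ∃ t', T.Tr b (updV s u) (Act.recv c) t'
  axIIIb : ∀ {b s t} (u : Valn Var Data) (d : BCh), dom u = T.E →
      T.Tr b s (Act.brecv d) t → ∃ t', T.Tr b (updV s u) (Act.brecv d) t'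
  axIV : ∀ {s d t}, T.Tr false s (Act.delay d) t → t = oplus X s d
  axV : ∀ (d : BCh), ∀ s ∈ T.S, ∃ b t, T.Tr b s (Act.brecv d) t
  axVI : ∀ {b s t} (d : BCh), T.Tr b s (Act.brecv d) t →
      restrictV s T.E = restrictV t T.E

/-- Compatibility of two TTSBs. -/
def Compatible (T1 T2 : PreTTSB Var Data BCh CCh) : Prop :=
  T1.H ∩ T2.V = ∅ ∧ T2.H ∩ T1.V = ∅ ∧ compatV T1.init T2.init

/-- Comparability of two TTSBs. -/
def Comparable (T1 T2 : PreTTSB Var Data BCh CCh) : Prop := T1.E = T2.E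

/-- The transition relations of the parallel composition of two TTSBs
(rules EXT, TAU, SYNC, TIME, SND, RCV of the paper, in both directions). -/
inductive ParTr (T1 T2 : PreTTSB Var Data BCh CCh) :
    Bool → Valn Var Data → Act BCh CCh → Valn Var Data → Prop where
  | ext₁ {r s r' : Valn Var Data} {a : Act BCh CCh} {b : Bool}
      (hr : r ∈ T1.S) (hs : s ∈ T2.S) (hc : compatV r s)
      (ha : a.isBinary) (ht : T1.Tr b r a r') :
      ParTr T1 T2 b (override r s) a (override r' s)
  | ext₂ {r s s' : Valn Var Data} {a : Act BCh CCh} {b : Bool}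
      (hr : r ∈ T1.S) (hs : s ∈ T2.S) (hc : compatV r s)
      (ha : a.isBinary) (ht : T2.Tr b s a s') :
      ParTr T1 T2 b (override r s) a (override s' r)
  | tau₁ {r s r' : Valn Var Data} {b : Bool}
      (hr : r ∈ T1.S) (hs : s ∈ T2.S) (hc : compatV r s)
      (ht : T1.Tr b r Act.tau r') (hcm : T2.Comm s → b = true) :
      ParTr T1 T2 b (override r s) Act.tau (override r' s)
  | tau₂ {r s s' : Valn Var Data} {b : Bool}
      (hr : r ∈ T1.S) (hs : s ∈ T2.S) (hc : compatV r s)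
      (ht : T2.Tr b s Act.tau s') (hcm : T1.Comm r → b = true) :
      ParTr T1 T2 b (override r s) Act.tau (override s' r)
  | sync₁ {r s r' s' : Valn Var Data} {c : CCh} {b b' : Bool}
      (hr : r ∈ T1.S) (hs : s ∈ T2.S) (hc : compatV r s)
      (ht1 : T1.Tr b r (Act.send c) r') (ht2 : T2.Tr b' (updV s r') (Act.recv c) s')
      (hcm : (T1.Comm r ∨ T2.Comm s) → (b || b') = true) :
      ParTr T1 T2 (b || b') (override r s) Act.tau (override s' r')
  | sync₂ {r s r' s' : Valn Var Data} {c : CCh} {b b' : Bool}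
      (hr : r ∈ T1.S) (hs : s ∈ T2.S) (hc : compatV r s)
      (ht1 : T2.Tr b s (Act.send c) s') (ht2 : T1.Tr b' (updV r s') (Act.recv c) r')
      (hcm : (T2.Comm s ∨ T1.Comm r) → (b || b') = true) :
      ParTr T1 T2 (b || b') (override r s) Act.tau (override r' s')
  | time₁ {r s r' s' : Valn Var Data} {d : NNReal}
      (hr : r ∈ T1.S) (hs : s ∈ T2.S) (hc : compatV r s)
      (ht1 : T1.Tr false r (Act.delay d) r') (ht2 : T2.Tr false s (Act.delay d) s') :
      ParTr T1 T2 false (override r s) (Act.delay d) (override r' s')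
  | time₂ {r s r' s' : Valn Var Data} {d : NNReal}
      (hr : r ∈ T1.S) (hs : s ∈ T2.S) (hc : compatV r s)
      (ht1 : T2.Tr false s (Act.delay d) s') (ht2 : T1.Tr false r (Act.delay d) r') :
      ParTr T1 T2 false (override r s) (Act.delay d) (override s' r')
  | snd₁ {r s r' s' : Valn Var Data} {δ : BCh} {b b' : Bool}
      (hr : r ∈ T1.S) (hs : s ∈ T2.S) (hc : compatV r s)
      (ht1 : T1.Tr b r (Act.bsend δ) r') (ht2 : T2.Tr b' (updV s r') (Act.brecv δ) s') :
      ParTr T1 T2 (b || b') (override r s) (Act.bsend δ) (override r' s')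
  | snd₂ {r s r' s' : Valn Var Data} {δ : BCh} {b b' : Bool}
      (hr : r ∈ T1.S) (hs : s ∈ T2.S) (hc : compatV r s)
      (ht1 : T2.Tr b s (Act.bsend δ) s') (ht2 : T1.Tr b' (updV r s') (Act.brecv δ) r') :
      ParTr T1 T2 (b || b') (override r s) (Act.bsend δ) (override s' r')
  | rcv₁ {r s r' s' : Valn Var Data} {δ : BCh} {b b' : Bool}
      (hr : r ∈ T1.S) (hs : s ∈ T2.S) (hc : compatV r s)
      (ht1 : T1.Tr b r (Act.brecv δ) r') (ht2 : T2.Tr b' s (Act.brecv δ) s') :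
      ParTr T1 T2 (b || b') (override r s) (Act.brecv δ) (override r' s')
  | rcv₂ {r s r' s' : Valn Var Data} {δ : BCh} {b b' : Bool}
      (hr : r ∈ T1.S) (hs : s ∈ T2.S) (hc : compatV r s)
      (ht1 : T2.Tr b s (Act.brecv δ) s') (ht2 : T1.Tr b' r (Act.brecv δ) r') :
      ParTr T1 T2 (b || b') (override r s) (Act.brecv δ) (override s' r')

/-- Parallel composition of TTSBs. -/
def par (T1 T2 : PreTTSB Var Data BCh CCh) : PreTTSB Var Data BCh CCh where
  E := T1.E ∪ T2.E
  H := T1.H ∪ T2.H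
  S := {v | ∃ r ∈ T1.S, ∃ s ∈ T2.S, compatV r s ∧ v = override r s}
  init := override T1.init T2.init
  Tr := ParTr T1 T2

/-- n-ary (left-associated) parallel composition. -/
def parAll (T : PreTTSB Var Data BCh CCh) (Ts : List (PreTTSB Var Data BCh CCh)) :
    PreTTSB Var Data BCh CCh :=
  Ts.foldl par T

/-- The restriction operator on TTSBs: channels in Cb/Cc and external variables in Ce
are internalized, following Definition 10 of the paper. -/
def restr (T : PreTTSB Var Data BCh CCh) (Cb : Set BCh) (Cc : Set CCh) (Ce : Set Var) :
    PreTTSB Var Data BCh CCh where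
  E := T.E \ Ce
  H := T.H ∪ (T.E ∩ Ce)
  S := T.S
  init := T.init
  Tr := fun b s a t =>
    (T.Tr b s a t ∧ Act.keptBy Cb Cc a) ∨
    (a = Act.tau ∧ ∃ δ ∈ Cb, T.Tr b s (Act.bsend δ) t ∧ (T.Comm s → b = true))

/-- Broadcast channels enabled in the transitions of T. -/
def enabledB (T : PreTTSB Var Data BCh CCh) : Set BCh :=
  {δ | ∃ b s t, T.Tr b s (Act.bsend δ) t ∨ T.Tr b s (Act.brecv δ) t}

/-- Binary channels enabled in the transitions of T. -/
def enabledC (T : PreTTSB Var Data BCh CCh) : Set CCh :=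
  {c | ∃ b s t, T.Tr b s (Act.send c) t ∨ T.Tr b s (Act.recv c) t}

/-! ### Timed step simulation -/

/-- R is a timed step simulation from T1 to T2 (Definition 11 of the paper). -/
structure IsTimedStepSim (T1 T2 : PreTTSB Var Data BCh CCh)
    (R : Valn Var Data → Valn Var Data → Prop) : Prop where
  mem : ∀ {r s}, R r s → r ∈ T1.S ∧ s ∈ T2.S
  initR : R T1.init T2.init
  extEq : ∀ {r s}, R r s → restrictV r T1.E = restrictV s T2.E
  updR : ∀ {r s} (u : Valn Var Data), R r s → dom u = T1.E → R (updV r u) (updV s u)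
  commR : ∀ {r s}, R r s → T2.Comm s → T1.Comm r
  stepR : ∀ {r s b a r'}, R r s → T1.Tr b r a r' →
      (∃ s', T2.Tr b s a s' ∧ R r' s') ∨ (a = Act.tau ∧ R r' s)

/-- T1 ≼ T2 : some timed step simulation from T1 to T2 exists. -/
def simLE (T1 T2 : PreTTSB Var Data BCh CCh) : Prop :=
  ∃ R, IsTimedStepSim T1 T2 R

/-! ### Timed automata -/

/-- Edge labels of timed automata (actions without time passage). -/
inductive ELab (BCh CCh : Type) : Type where
  | bsend : BCh → ELab BCh CCh
  | brecv : BCh → ELab BCh CCh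
  | send : CCh → ELab BCh CCh
  | recv : CCh → ELab BCh CCh
  | tau : ELab BCh CCh

/-- Edge labels as actions. -/
def ELab.toAct : ELab BCh CCh → Act BCh CCh
  | .bsend δ => .bsend δ
  | .brecv δ => .brecv δ
  | .send c => .send c
  | .recv c => .recv c
  | .tau => .tau

/-- A timed automaton: locations (a set of data values), committed locations, initial
location, external/internal variables, initial valuation, invariants, transitions
(location, guard, action, update function, location) and urgent transitions. -/
structure TA (Var Data BCh CCh : Type) : Type where
  L : Set Data
  K : Set Data
  l0 : Data
  E : Set Var
  H : Set Var
  v0 : Valn Var Data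
  Inv : Data → Set (Valn Var Data)
  Tr : Data → Set (Valn Var Data) → ELab BCh CCh →
      (Valn Var Data → Valn Var Data) → Data → Prop
  UTr : Data → Set (Valn Var Data) → ELab BCh CCh →
      (Valn Var Data → Valn Var Data) → Data → Prop

/-- The variables of a timed automaton. -/
def TA.V (A : TA Var Data BCh CCh) : Set Var := A.E ∪ A.H

/-- Well-formedness of a timed automaton, together with Axioms VII–XI of the paper
(clock set X). -/
structure TAok (X : Set Var) (A : TA Var Data BCh CCh) : Prop where
  disjEH : Disjoint A.E A.H
  l0mem : A.l0 ∈ A.L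
  Ksub : A.K ⊆ A.L
  v0dom : dom A.v0 = A.V
  v0inv : restrictV A.v0 A.V ∈ A.Inv A.l0
  invLC : ∀ l, leftClosed X (A.Inv l)
  urgSub : ∀ {l g a ρ l'}, A.UTr l g a ρ l' → A.Tr l g a ρ l'
  trLoc : ∀ {l g a ρ l'}, A.Tr l g a ρ l' → l ∈ A.L ∧ l' ∈ A.L
  updDom : ∀ {l g a ρ l'}, A.Tr l g a ρ l' → ∀ v, dom v = A.V → dom (ρ v) = A.V
  axVII : ∀ l, indep A.V A.E (A.Inv l)
  axVIIIc : ∀ {l g ρ l'} (c : CCh), A.Tr l g (ELab.recv c) ρ l' → indep A.V A.E g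
  axVIIIb : ∀ {l g ρ l'} (δ : BCh), A.Tr l g (ELab.brecv δ) ρ l' → indep A.V A.E g
  axIX : ∀ {l}, l ∈ A.K → ∀ v, dom v = A.V → v ∈ A.Inv l →
      ∃ g a ρ l', A.Tr l g a ρ l' ∧ v ∈ g ∧ ρ v ∈ A.Inv l'
  axX : ∀ {l g a ρ l'}, A.UTr l g a ρ l' → a = ELab.tau ∧ indep A.V (A.V ∩ X) g
  axXI : ∀ {l g ρ l'} (δ : BCh), A.Tr l g (ELab.brecv δ) ρ l' →
      ∀ v, restrictV (ρ v) A.E = restrictV v A.E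

/-- States of the TTSB associated to a TA with location variable ℓ. -/
def taState (A : TA Var Data BCh CCh) (ℓ : Var) : Set (Valn Var Data) :=
  {v | dom v = A.V ∪ {ℓ} ∧
    ∃ l ∈ A.L, v ℓ = some (Sum.inr l) ∧ restrictV v A.V ∈ A.Inv l}

/-- Application of an update function ρ : Val(V) → Val(V) to a larger state. -/
def applyU (A : TA Var Data BCh CCh) (ρ : Valn Var Data → Valn Var Data)
    (s : Valn Var Data) : Valn Var Data :=
  updV s (ρ (restrictV s A.V))

/-- The transition relations of the TTSB associated to a TA
(rules ACT, TIME and VIRT of the paper). -/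
inductive TATrans (X : Set Var) (A : TA Var Data BCh CCh) (ℓ : Var) :
    Bool → Valn Var Data → Act BCh CCh → Valn Var Data → Prop where
  | act {s : Valn Var Data} {l : Data} {g : Set (Valn Var Data)} {a : ELab BCh CCh}
      {ρ : Valn Var Data → Valn Var Data} {l' : Data} {b : Bool}
      (hs : s ∈ taState A ℓ) (hl : s ℓ = some (Sum.inr l))
      (ht : A.Tr l g a ρ l') (hg : restrictV s A.V ∈ g)
      (hb : b = true ↔ l ∈ A.K)
      (hs' : updV (applyU A ρ s) (single ℓ (Sum.inr l')) ∈ taState A ℓ) :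
      TATrans X A ℓ b s a.toAct (updV (applyU A ρ s) (single ℓ (Sum.inr l')))
  | time {s : Valn Var Data} {l : Data} {d : NNReal}
      (hs : s ∈ taState A ℓ) (hl : s ℓ = some (Sum.inr l)) (hK : l ∉ A.K)
      (hs' : oplus X s d ∈ taState A ℓ)
      (hurg : ∀ d' : NNReal, d' ≤ d → ∀ g ρ l', A.UTr l g ELab.tau ρ l' →
          restrictV (oplus X s d') A.V ∉ g) :
      TATrans X A ℓ false s (Act.delay d) (oplus X s d)
  | virt {s : Valn Var Data} {l : Data} (δ : BCh)
      (hs : s ∈ taState A ℓ) (hl : s ℓ = some (Sum.inr l))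
      (hno : ∀ g ρ l', A.Tr l g (ELab.brecv δ) ρ l' → restrictV s A.V ∉ g) :
      TATrans X A ℓ false s (Act.brecv δ) s

/-- The TTSB associated to a timed automaton. -/
def TTSBof (X : Set Var) (A : TA Var Data BCh CCh) (ℓ : Var) :
    PreTTSB Var Data BCh CCh where
  E := A.E
  H := A.H ∪ {ℓ}
  S := taState A ℓ
  init := override A.v0 (single ℓ (Sum.inr A.l0))
  Tr := TATrans X A ℓ

/-! ### Networks of timed automata and their non-compositional semantics -/

/-- A network component: a timed automaton together with its (fresh) location variable. -/
abbrev Comp (Var Data BCh CCh : Type) : Type := TA Var Data BCh CCh × Var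

/-- The variables of a component, including its location variable. -/
def compW (c : Comp Var Data BCh CCh) : Set Var := c.1.V ∪ {c.2}

/-- The TTSB associated to a component. -/
def TTSBofC (X : Set Var) (c : Comp Var Data BCh CCh) : PreTTSB Var Data BCh CCh :=
  TTSBof X c.1 c.2

/-- All variables of a network. -/
def NTAvars (N : List (Comp Var Data BCh CCh)) : Set Var :=
  {x | ∃ c ∈ N, x ∈ compW c}

/-- The states of the non-compositional (UPPAAL) semantics of a network. -/
def NTAstates (N : List (Comp Var Data BCh CCh)) : Set (Valn Var Data) :=
  {v | dom v = NTAvars N ∧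
    ∀ c ∈ N, ∃ l ∈ c.1.L, v c.2 = some (Sum.inr l) ∧ restrictV v c.1.V ∈ c.1.Inv l}

/-- The initial state of the non-compositional semantics of a network. -/
def NTAinit (N : List (Comp Var Data BCh CCh)) : Valn Var Data :=
  N.foldr (fun c w => override (override c.1.v0 (single c.2 (Sum.inr c.1.l0))) w)
    (fun _ => none)

/-- A component is in a committed location at state s. -/
def atCommitted (c : Comp Var Data BCh CCh) (s : Valn Var Data) : Prop :=
  ∃ l ∈ c.1.K, s c.2 = some (Sum.inr l)

/-- No component of the network is in a committed location. -/
def noneCommitted (N : List (Comp Var Data BCh CCh)) (s : Valn Var Data) : Prop :=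
  ∀ c ∈ N, ¬ atCommitted c s

/-- Application of a component update function to a network state. -/
def applyC (c : Comp Var Data BCh CCh) (ρ : Valn Var Data → Valn Var Data)
    (s : Valn Var Data) : Valn Var Data :=
  updV s (ρ (restrictV s c.1.V))

/-- j ∈ RS(δ, i, s): component j (≠ i) has an executable δ?-transition in s. -/
def RSmem (N : List (Comp Var Data BCh CCh)) (δ : BCh) (i : ℕ) (s : Valn Var Data)
    (j : ℕ) : Prop :=
  j ≠ i ∧ ∃ (hj : j < N.length), ∃ l g ρ l',
    s (N.get ⟨j, hj⟩).2 = some (Sum.inr l) ∧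
    (N.get ⟨j, hj⟩).1.Tr l g (ELab.brecv δ) ρ l' ∧
    restrictV s (N.get ⟨j, hj⟩).1.V ∈ g

/-- Apply the chosen receiver updates in index order (left-to-right). -/
def bcastUpds (N : List (Comp Var Data BCh CCh)) (δ : BCh) (i : ℕ) (s0 : Valn Var Data)
    (ρs : ℕ → Valn Var Data → Valn Var Data) (v : Valn Var Data) : Valn Var Data :=
  (List.range N.length).foldl
    (fun w j =>
      if hj : j < N.length then
        if RSmem N δ i s0 j then applyC (N.get ⟨j, hj⟩) (ρs j) w else w
      else w) v

/-- Update the location variables of all receivers. -/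
def bcastLocs (N : List (Comp Var Data BCh CCh)) (δ : BCh) (i : ℕ) (s0 : Valn Var Data)
    (ls' : ℕ → Data) (v : Valn Var Data) : Valn Var Data :=
  (List.range N.length).foldl
    (fun w j =>
      if hj : j < N.length then
        if RSmem N δ i s0 j then
          updV w (single (N.get ⟨j, hj⟩).2 (Sum.inr (ls' j)))
        else w
      else w) v

/-- The non-compositional (UPPAAL) transition relation of a network
(rules TAU, SYNC, TIME and BCST of the paper). -/
inductive NTATr (X : Set Var) (N : List (Comp Var Data BCh CCh)) :
    Valn Var Data → Act BCh CCh → Valn Var Data → Prop where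
  | tau {s : Valn Var Data} {i : ℕ} (hi : i < N.length)
      {l : Data} {g : Set (Valn Var Data)} {ρ : Valn Var Data → Valn Var Data} {l' : Data}
      (hs : s ∈ NTAstates N)
      (hl : s (N.get ⟨i, hi⟩).2 = some (Sum.inr l))
      (ht : (N.get ⟨i, hi⟩).1.Tr l g ELab.tau ρ l')
      (hg : restrictV s (N.get ⟨i, hi⟩).1.V ∈ g)
      (hcomm : noneCommitted N s ∨ l ∈ (N.get ⟨i, hi⟩).1.K)
      (hs' : updV (applyC (N.get ⟨i, hi⟩) ρ s)
          (single (N.get ⟨i, hi⟩).2 (Sum.inr l')) ∈ NTAstates N) :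
      NTATr X N s Act.tau
        (updV (applyC (N.get ⟨i, hi⟩) ρ s) (single (N.get ⟨i, hi⟩).2 (Sum.inr l')))
  | sync {s : Valn Var Data} {i j : ℕ} (hi : i < N.length) (hj : j < N.length)
      (hij : i ≠ j) {li lj li' lj' : Data} {gi gj : Set (Valn Var Data)}
      {ρi ρj : Valn Var Data → Valn Var Data} {c : CCh}
      (hs : s ∈ NTAstates N)
      (hli : s (N.get ⟨i, hi⟩).2 = some (Sum.inr li))
      (hlj : s (N.get ⟨j, hj⟩).2 = some (Sum.inr lj))
      (hti : (N.get ⟨i, hi⟩).1.Tr li gi (ELab.send c) ρi li')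
      (htj : (N.get ⟨j, hj⟩).1.Tr lj gj (ELab.recv c) ρj lj')
      (hgi : restrictV s (N.get ⟨i, hi⟩).1.V ∈ gi)
      (hgj : restrictV s (N.get ⟨j, hj⟩).1.V ∈ gj)
      (hcomm : noneCommitted N s ∨ li ∈ (N.get ⟨i, hi⟩).1.K ∨ lj ∈ (N.get ⟨j, hj⟩).1.K)
      (hs' : updV (updV (applyC (N.get ⟨j, hj⟩) ρj (applyC (N.get ⟨i, hi⟩) ρi s))
          (single (N.get ⟨i, hi⟩).2 (Sum.inr li')))
          (single (N.get ⟨j, hj⟩).2 (Sum.inr lj')) ∈ NTAstates N) :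
      NTATr X N s Act.tau
        (updV (updV (applyC (N.get ⟨j, hj⟩) ρj (applyC (N.get ⟨i, hi⟩) ρi s))
          (single (N.get ⟨i, hi⟩).2 (Sum.inr li')))
          (single (N.get ⟨j, hj⟩).2 (Sum.inr lj')))
  | time {s : Valn Var Data} {d : NNReal}
      (hs : s ∈ NTAstates N) (hs' : oplus X s d ∈ NTAstates N)
      (hK : noneCommitted N s)
      (hurg : ¬ ∃ (i : ℕ) (hi : i < N.length), ∃ l g ρ l',
          (N.get ⟨i, hi⟩).1.UTr l g ELab.tau ρ l' ∧
          s (N.get ⟨i, hi⟩).2 = some (Sum.inr l) ∧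
          restrictV s (N.get ⟨i, hi⟩).1.V ∈ g) :
      NTATr X N s (Act.delay d) (oplus X s d)
  | bcst {s : Valn Var Data} {i : ℕ} (hi : i < N.length)
      {l l' : Data} {g : Set (Valn Var Data)} {ρ : Valn Var Data → Valn Var Data}
      {δ : BCh} (ρs : ℕ → Valn Var Data → Valn Var Data) (ls' : ℕ → Data)
      (hs : s ∈ NTAstates N)
      (hl : s (N.get ⟨i, hi⟩).2 = some (Sum.inr l))
      (ht : (N.get ⟨i, hi⟩).1.Tr l g (ELab.bsend δ) ρ l')
      (hg : restrictV s (N.get ⟨i, hi⟩).1.V ∈ g)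
      (hrecv : ∀ j (hj : j < N.length), RSmem N δ i s j →
          ∃ lj gj, s (N.get ⟨j, hj⟩).2 = some (Sum.inr lj) ∧
            (N.get ⟨j, hj⟩).1.Tr lj gj (ELab.brecv δ) (ρs j) (ls' j) ∧
            restrictV s (N.get ⟨j, hj⟩).1.V ∈ gj)
      (hcomm : noneCommitted N s ∨ l ∈ (N.get ⟨i, hi⟩).1.K ∨
          ∃ j, ∃ (hj : j < N.length), RSmem N δ i s j ∧
            ∃ lj ∈ (N.get ⟨j, hj⟩).1.K, s (N.get ⟨j, hj⟩).2 = some (Sum.inr lj))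
      (hs' : bcastLocs N δ i s ls'
          (updV (bcastUpds N δ i s ρs (applyC (N.get ⟨i, hi⟩) ρ s))
            (single (N.get ⟨i, hi⟩).2 (Sum.inr l'))) ∈ NTAstates N) :
      NTATr X N s Act.tau
        (bcastLocs N δ i s ls'
          (updV (bcastUpds N δ i s ρs (applyC (N.get ⟨i, hi⟩) ρ s))
            (single (N.get ⟨i, hi⟩).2 (Sum.inr l'))))

/-- Well-formedness of a network: components satisfy Axioms VII–XI, are pairwise
compatible, and the location variables are fresh and pairwise distinct. -/
def NTAok (X : Set Var) (N : List (Comp Var Data BCh CCh)) : Prop :=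
  (∀ c ∈ N, TAok X c.1) ∧
  N.Pairwise (fun c c' => c.1.H ∩ c'.1.V = ∅ ∧ c'.1.H ∩ c.1.V = ∅ ∧
    compatV c.1.v0 c'.1.v0) ∧
  (∀ c ∈ N, ∀ c' ∈ N, c.2 ∉ c'.1.V) ∧
  N.Pairwise (fun c c' => c.2 ≠ c'.2)

/-- Reachability in the non-compositional semantics of a network. -/
def Reach (X : Set Var) (N : List (Comp Var Data BCh CCh)) (s : Valn Var Data) : Prop :=
  Relation.ReflTransGen (fun u v => ∃ a, NTATr X N u a v) (NTAinit N) s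

/-! ### Auxiliary lemmas for Lemma 3 -/

lemma mem_dom_iff {α β : Type*} {f : α → Option β} {x : α} : x ∈ dom f ↔ f x ≠ none :=
  Iff.rfl

lemma override_apply {α β : Type*} (f g : α → Option β) (x : α) :
    override f g x = if x ∈ dom f then f x else g x := rfl

lemma restrictV_apply {α β : Type*} (f : α → Option β) (E : Set α) (x : α) :
    restrictV f E x = if x ∈ E then f x else none := rfl

lemma updV_apply {α β : Type*} (f g : α → Option β) (x : α) :
    updV f g x = if x ∈ dom f then (if x ∈ dom g then g x else f x) else none := rfl

lemma dom_updV' {α β : Type*} (f g : α → Option β) : dom (updV f g) = dom f := by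
  ext x
  constructor
  · intro h
    by_contra hf
    exact h (by rw [updV_apply, if_neg hf])
  · intro hf
    rw [mem_dom_iff, updV_apply, if_pos hf]
    by_cases hg : x ∈ dom g
    · rw [if_pos hg]; exact hg
    · rw [if_neg hg]; exact hf

lemma dom_restrictV' {α β : Type*} {f : α → Option β} {E : Set α} (hE : E ⊆ dom f) :
    dom (restrictV f E) = E := by
  ext x
  constructor
  · intro h
    by_contra hx
    exact h (by rw [restrictV_apply, if_neg hx])
  · intro hx
    rw [mem_dom_iff, restrictV_apply, if_pos hx]
    exact hE hx

/-- Decomposition of an overridden state is unique. -/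
lemma override_decomp {α β : Type*} {r s r₀ s₀ : α → Option β}
    (hdr : dom r₀ = dom r) (hds : dom s₀ = dom s)
    (hc : compatV r s) (hc₀ : compatV r₀ s₀)
    (heq : override r₀ s₀ = override r s) : r₀ = r ∧ s₀ = s := by
  have hr0 : r₀ = r := by
    funext x
    by_cases hx : x ∈ dom r
    · have hx0 : x ∈ dom r₀ := hdr ▸ hx
      have h := congrFun heq x
      rwa [override_apply, override_apply, if_pos hx, if_pos hx0] at h
    · have hx0 : x ∉ dom r₀ := fun h => hx (hdr ▸ h)
      have h1 : r₀ x = none := not_not.mp hx0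
      have h2 : r x = none := not_not.mp hx
      rw [h1, h2]
  refine ⟨hr0, ?_⟩
  funext x
  by_cases hxs : x ∈ dom s
  · by_cases hxr : x ∈ dom r
    · have hx0r : x ∈ dom r₀ := hdr ▸ hxr
      have hx0s : x ∈ dom s₀ := hds ▸ hxs
      have e1 : r₀ x = s₀ x := hc₀ x ⟨hx0r, hx0s⟩
      have e2 : r x = s x := hc x ⟨hxr, hxs⟩
      rw [← e1, ← e2, hr0]
    · have hx0 : x ∉ dom r₀ := fun h => hxr (hdr ▸ h)
      have h := congrFun heq x
      rwa [override_apply, override_apply, if_neg hxr, if_neg hx0] at h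
  · have hx0 : x ∉ dom s₀ := fun h => hxs (hds ▸ h)
    have h1 : s₀ x = none := not_not.mp hx0
    have h2 : s x = none := not_not.mp hxs
    rw [h1, h2]

/-- Updating by `z` and then restoring the original values on `E` gives back `s`. -/
lemma updV_updV_restrict {α β : Type*} {s z : α → Option β} {E : Set α}
    (hE : E ⊆ dom s) (hz : dom z ∩ dom s ⊆ E) :
    updV (updV s z) (restrictV s E) = s := by
  funext x
  rw [updV_apply, dom_updV', dom_restrictV' hE]
  by_cases hxs : x ∈ dom s
  · rw [if_pos hxs]
    by_cases hxE : x ∈ E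
    · rw [if_pos hxE, restrictV_apply, if_pos hxE]
    · rw [if_neg hxE, updV_apply, if_pos hxs]
      by_cases hxz : x ∈ dom z
      · exact absurd (hz ⟨hxz, hxs⟩) hxE
      · rw [if_neg hxz]
  · rw [if_neg hxs]
    exact (not_not.mp hxs).symm

/-- An update by `z` touching only variables in `E ⊆ dom s` is an update by some
valuation with domain exactly `E`. -/
lemma updV_eq_updV_of_domE {α β : Type*} {s z : α → Option β} {E : Set α}
    (hE : E ⊆ dom s) (hz : dom z ∩ dom s ⊆ E) :
    ∃ u, dom u = E ∧ updV s z = updV s u := by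
  classical
  have hdu : dom (fun y => if y ∈ E then (if y ∈ dom z then z y else s y) else none
      : α → Option β) = E := by
    ext x
    constructor
    · intro h
      by_contra hxE
      exact h (by show (if x ∈ E then _ else none) = none; rw [if_neg hxE])
    · intro hxE
      show (if x ∈ E then (if x ∈ dom z then z x else s x) else none) ≠ none
      rw [if_pos hxE]
      by_cases hxz : x ∈ dom z
      · rw [if_pos hxz]; exact hxz
      · rw [if_neg hxz]; exact hE hxE
  refine ⟨_, hdu, ?_⟩
  funext x
  rw [updV_apply, updV_apply, hdu]
  by_cases hxs : x ∈ dom s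
  · rw [if_pos hxs, if_pos hxs]
    by_cases hxz : x ∈ dom z
    · have hxE : x ∈ E := hz ⟨hxz, hxs⟩
      rw [if_pos hxz, if_pos hxE]
      exact (if_pos hxE).symm
    · rw [if_neg hxz]
      by_cases hxE : x ∈ E
      · rw [if_pos hxE]
        exact (if_pos hxE).symm
      · rw [if_neg hxE]
  · rw [if_neg hxs, if_neg hxs]

/-- Lemma 3: a state of the composition is committed iff one of its component
states is committed. -/
theorem comm_par_iff (X : Set Var) (T1 T2 : PreTTSB Var Data BCh CCh)
    (h1 : IsTTSB X T1) (h2 : IsTTSB X T2) (hc : Compatible T1 T2)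
    (r s : Valn Var Data) (hr : r ∈ T1.S) (hs : s ∈ T2.S) (hrs : compatV r s) :
    (par T1 T2).Comm (override r s) ↔ (T1.Comm r ∨ T2.Comm s) := by
  obtain ⟨hH1, hH2, _⟩ := hc
  have hds : dom s = T2.V := h2.statesDom s hs
  have hdr : dom r = T1.V := h1.statesDom r hr
  have hE2s : T2.E ⊆ dom s := by rw [hds]; exact Set.subset_union_left
  have hE1r : T1.E ⊆ dom r := by rw [hdr]; exact Set.subset_union_left
  have hsub2 : T1.V ∩ T2.V ⊆ T2.E := by
    rintro x ⟨hx1, hx2⟩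
    rcases hx2 with hxe | hxh
    · exact hxe
    · exact (Set.eq_empty_iff_forall_notMem.mp hH2 x ⟨hxh, hx1⟩).elim
  have hsub1 : T2.V ∩ T1.V ⊆ T1.E := by
    rintro x ⟨hx2, hx1⟩
    rcases hx1 with hxe | hxh
    · exact hxe
    · exact (Set.eq_empty_iff_forall_notMem.mp hH1 x ⟨hxh, hx2⟩).elim
  have hzs : ∀ z : Valn Var Data, z ∈ T1.S → dom z ∩ dom s ⊆ T2.E := by
    intro z hz
    rw [h1.statesDom z hz, hds]; exact hsub2
  have hzr : ∀ z : Valn Var Data, z ∈ T2.S → dom z ∩ dom r ⊆ T1.E := by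
    intro z hz
    rw [h2.statesDom z hz, hdr]; exact hsub1
  -- a committed receive of T2 from an update of s yields Comm s, and symmetrically
  have commS_recv : ∀ {z t : Valn Var Data} {c : CCh}, z ∈ T1.S →
      T2.Tr true (updV s z) (Act.recv c) t → T2.Comm s := by
    intro z t c hz ht
    have hdu : dom (restrictV s T2.E) = T2.E := dom_restrictV' hE2s
    obtain ⟨t', ht'⟩ := h2.axIIIc (restrictV s T2.E) c hdu ht
    rw [updV_updV_restrict hE2s (hzs z hz)] at ht'
    exact ⟨_, _, ht'⟩
  have commS_brecv : ∀ {z t : Valn Var Data} {δ : BCh}, z ∈ T1.S →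
      T2.Tr true (updV s z) (Act.brecv δ) t → T2.Comm s := by
    intro z t δ hz ht
    have hdu : dom (restrictV s T2.E) = T2.E := dom_restrictV' hE2s
    obtain ⟨t', ht'⟩ := h2.axIIIb (restrictV s T2.E) δ hdu ht
    rw [updV_updV_restrict hE2s (hzs z hz)] at ht'
    exact ⟨_, _, ht'⟩
  have commR_recv : ∀ {z t : Valn Var Data} {c : CCh}, z ∈ T2.S →
      T1.Tr true (updV r z) (Act.recv c) t → T1.Comm r := by
    intro z t c hz ht
    have hdu : dom (restrictV r T1.E) = T1.E := dom_restrictV' hE1r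
    obtain ⟨t', ht'⟩ := h1.axIIIc (restrictV r T1.E) c hdu ht
    rw [updV_updV_restrict hE1r (hzr z hz)] at ht'
    exact ⟨_, _, ht'⟩
  have commR_brecv : ∀ {z t : Valn Var Data} {δ : BCh}, z ∈ T2.S →
      T1.Tr true (updV r z) (Act.brecv δ) t → T1.Comm r := by
    intro z t δ hz ht
    have hdu : dom (restrictV r T1.E) = T1.E := dom_restrictV' hE1r
    obtain ⟨t', ht'⟩ := h1.axIIIb (restrictV r T1.E) δ hdu ht
    rw [updV_updV_restrict hE1r (hzr z hz)] at ht'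
    exact ⟨_, _, ht'⟩
  have decomp : ∀ {r₀ s₀ : Valn Var Data}, r₀ ∈ T1.S → s₀ ∈ T2.S → compatV r₀ s₀ →
      override r₀ s₀ = override r s → r₀ = r ∧ s₀ = s := by
    intro r₀ s₀ hr₀ hs₀ hc₀ heq
    exact override_decomp (by rw [h1.statesDom r₀ hr₀, hdr])
      (by rw [h2.statesDom s₀ hs₀, hds]) hrs hc₀ heq
  constructor
  · rintro ⟨a, t, htr⟩
    change ParTr T1 T2 true (override r s) a t at htr
    generalize hbeq : (true : Bool) = bb at htr
    generalize hveq : override r s = v at htr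
    cases htr with
    | ext₁ hr₀ hs₀ hc₀ ha ht =>
      obtain ⟨e1, e2⟩ := decomp hr₀ hs₀ hc₀ hveq.symm
      subst e1
      rw [← hbeq] at ht
      exact Or.inl ⟨_, _, ht⟩
    | ext₂ hr₀ hs₀ hc₀ ha ht =>
      obtain ⟨e1, e2⟩ := decomp hr₀ hs₀ hc₀ hveq.symm
      subst e2
      rw [← hbeq] at ht
      exact Or.inr ⟨_, _, ht⟩
    | tau₁ hr₀ hs₀ hc₀ ht hcm =>
      obtain ⟨e1, e2⟩ := decomp hr₀ hs₀ hc₀ hveq.symm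
      subst e1
      rw [← hbeq] at ht
      exact Or.inl ⟨_, _, ht⟩
    | tau₂ hr₀ hs₀ hc₀ ht hcm =>
      obtain ⟨e1, e2⟩ := decomp hr₀ hs₀ hc₀ hveq.symm
      subst e2
      rw [← hbeq] at ht
      exact Or.inr ⟨_, _, ht⟩
    | sync₁ hr₀ hs₀ hc₀ ht1 ht2 hcm =>
      obtain ⟨e1, e2⟩ := decomp hr₀ hs₀ hc₀ hveq.symm
      subst e1; subst e2
      rename_i b b'
      cases b with
      | true => exact Or.inl ⟨_, _, ht1⟩
      | false =>
        simp only [Bool.false_or] at hbeq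
        rw [← hbeq] at ht2
        exact Or.inr (commS_recv (h1.trMem ht1).2 ht2)
    | sync₂ hr₀ hs₀ hc₀ ht1 ht2 hcm =>
      obtain ⟨e1, e2⟩ := decomp hr₀ hs₀ hc₀ hveq.symm
      subst e1; subst e2
      rename_i b b'
      cases b with
      | true => exact Or.inr ⟨_, _, ht1⟩
      | false =>
        simp only [Bool.false_or] at hbeq
        rw [← hbeq] at ht2
        exact Or.inl (commR_recv (h2.trMem ht1).2 ht2)
    | snd₁ hr₀ hs₀ hc₀ ht1 ht2 =>
      obtain ⟨e1, e2⟩ := decomp hr₀ hs₀ hc₀ hveq.symm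
      subst e1; subst e2
      rename_i b b'
      cases b with
      | true => exact Or.inl ⟨_, _, ht1⟩
      | false =>
        simp only [Bool.false_or] at hbeq
        rw [← hbeq] at ht2
        exact Or.inr (commS_brecv (h1.trMem ht1).2 ht2)
    | snd₂ hr₀ hs₀ hc₀ ht1 ht2 =>
      obtain ⟨e1, e2⟩ := decomp hr₀ hs₀ hc₀ hveq.symm
      subst e1; subst e2
      rename_i b b'
      cases b with
      | true => exact Or.inr ⟨_, _, ht1⟩
      | false =>
        simp only [Bool.false_or] at hbeq
        rw [← hbeq] at ht2
        exact Or.inl (commR_brecv (h2.trMem ht1).2 ht2)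
    | rcv₁ hr₀ hs₀ hc₀ ht1 ht2 =>
      obtain ⟨e1, e2⟩ := decomp hr₀ hs₀ hc₀ hveq.symm
      subst e1; subst e2
      rename_i b b'
      cases b with
      | true => exact Or.inl ⟨_, _, ht1⟩
      | false =>
        simp only [Bool.false_or] at hbeq
        rw [← hbeq] at ht2
        exact Or.inr ⟨_, _, ht2⟩
    | time₁ hr₀ hs₀ hc₀ ht1 ht2 => exact Bool.noConfusion hbeq
    | time₂ hr₀ hs₀ hc₀ ht1 ht2 => exact Bool.noConfusion hbeq
    | rcv₂ hr₀ hs₀ hc₀ ht1 ht2 =>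
      obtain ⟨e1, e2⟩ := decomp hr₀ hs₀ hc₀ hveq.symm
      subst e1; subst e2
      rename_i b b'
      cases b with
      | true => exact Or.inr ⟨_, _, ht1⟩
      | false =>
        simp only [Bool.false_or] at hbeq
        rw [← hbeq] at ht2
        exact Or.inl ⟨_, _, ht2⟩
  · rintro (⟨a, t, ht⟩ | ⟨a, t, ht⟩)
    · cases a with
      | bsend δ =>
        have htS : t ∈ T1.S := (h1.trMem ht).2
        have hmem : updV s t ∈ T2.S := by
          obtain ⟨u, hdu, hequ⟩ := updV_eq_updV_of_domE hE2s (hzs t htS)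
          rw [hequ]
          exact h2.axII u hs hdu
        obtain ⟨b', t', ht2⟩ := h2.axV δ _ hmem
        exact ⟨_, _, ParTr.snd₁ hr hs hrs ht ht2⟩
      | brecv δ =>
        obtain ⟨b', t', ht2⟩ := h2.axV δ s hs
        exact ⟨_, _, ParTr.rcv₁ hr hs hrs ht ht2⟩
      | send c => exact ⟨_, _, ParTr.ext₁ (a := Act.send c) hr hs hrs True.intro ht⟩
      | recv c => exact ⟨_, _, ParTr.ext₁ (a := Act.recv c) hr hs hrs True.intro ht⟩
      | tau => exact ⟨_, _, ParTr.tau₁ hr hs hrs ht (fun _ => rfl)⟩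
      | delay d =>
        rcases h1.axI ht ht with h | ⟨h, _⟩
        · exact h.elim
        · exact nomatch h
    · cases a with
      | bsend δ =>
        have htS : t ∈ T2.S := (h2.trMem ht).2
        have hmem : updV r t ∈ T1.S := by
          obtain ⟨u, hdu, hequ⟩ := updV_eq_updV_of_domE hE1r (hzr t htS)
          rw [hequ]
          exact h1.axII u hr hdu
        obtain ⟨b', t', ht2⟩ := h1.axV δ _ hmem
        exact ⟨_, _, ParTr.snd₂ hr hs hrs ht ht2⟩
      | brecv δ =>
        obtain ⟨b', t', ht2⟩ := h1.axV δ r hr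
        exact ⟨_, _, ParTr.rcv₂ hr hs hrs ht ht2⟩
      | send c => exact ⟨_, _, ParTr.ext₂ (a := Act.send c) hr hs hrs True.intro ht⟩
      | recv c => exact ⟨_, _, ParTr.ext₂ (a := Act.recv c) hr hs hrs True.intro ht⟩
      | tau => exact ⟨_, _, ParTr.tau₂ hr hs hrs ht (fun _ => rfl)⟩
      | delay d =>
        rcases h2.axI ht ht with h | ⟨h, _⟩
        · exact h.elim
        · exact nomatch h

end TTSBpaper
end
end

section
/- Let A be a timed automaton satisfying Axioms VII–XI and let s be a state of TTSB(A). Then s(loc) is a committed location of A if and only if s is a committed state: s(loc) ∈ K ⟺ Comm(s). -/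
open Classical

noncomputable section

namespace TTSBpaper

variable {Var Data BCh CCh : Type}

/-- Lemma 5: in the TTSB semantics of a TA, a state is committed iff the
corresponding location is committed. -/
theorem committed_loc_iff (X : Set Var) (A : TA Var Data BCh CCh) (ℓ : Var)
    (hA : TAok X A) (hfresh : ℓ ∉ A.V)
    (s : Valn Var Data) (hs : s ∈ (TTSBof X A ℓ).S) (l : Data)
    (hl : s ℓ = some (Sum.inr l)) :
    l ∈ A.K ↔ (TTSBof X A ℓ).Comm s := by
  have hsS : s ∈ taState A ℓ := hs
  obtain ⟨hdom, l₀, hlL, hlv, hinv⟩ := hsS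
  have hl0 : l₀ = l := by
    rw [hl] at hlv
    exact (Sum.inr.inj (Option.some.inj hlv)).symm
  subst hl0
  constructor
  · intro hK
    have hVsub : A.V ⊆ dom s := by rw [hdom]; exact Set.subset_union_left
    have hdr : dom (restrictV s A.V) = A.V := by
      ext x
      simp only [dom, restrictV, Set.mem_setOf_eq]
      constructor
      · intro h
        by_cases hx : x ∈ A.V
        · exact hx
        · simp [hx] at h
      · intro hx
        rw [if_pos hx]; exact hVsub hx
    obtain ⟨g, a, ρ, l', ht, hg, hinv'⟩ := hA.axIX hK _ hdr hinv
    have hdw : dom (ρ (restrictV s A.V)) = A.V := hA.updDom ht _ hdr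
    set w := ρ (restrictV s A.V) with hw
    set u := applyU A ρ s with hu
    have hus : ∀ x, u x = if x ∈ dom s then (if x ∈ A.V then w x else s x) else none := by
      intro x
      simp only [hu, applyU, updV, restrictV, override, ← hw, hdw]
    have hdu : dom u = dom s := by
      ext x
      constructor
      · intro hx
        by_contra hxs
        exact hx (by rw [hus x, if_neg hxs])
      · intro hxs
        show u x ≠ none
        rw [hus x, if_pos hxs]
        by_cases hxv : x ∈ A.V
        · rw [if_pos hxv]
          exact (show x ∈ dom w by rw [hdw]; exact hxv)
        · rw [if_neg hxv]
          exact hxs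
    set t := updV u (single ℓ (Sum.inr l' : Value Data)) with htdef
    have hsingdom : ∀ x : Var, (x ∈ dom (single ℓ (Sum.inr l' : Value Data))) ↔ x = ℓ := by
      intro x
      simp only [dom, single, Set.mem_setOf_eq]
      by_cases hx : x = ℓ <;> simp [hx]
    have hts : ∀ x, t x = if x ∈ dom u then (if x = ℓ then some (Sum.inr l') else u x) else none := by
      intro x
      simp only [htdef, updV, restrictV, override]
      by_cases hxu : x ∈ dom u
      · rw [if_pos hxu, if_pos hxu]
        by_cases hx : x = ℓ
        · rw [if_pos ((hsingdom x).mpr hx), if_pos hx]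
          subst hx
          simp [single]
        · rw [if_neg (fun h => hx ((hsingdom x).mp h)), if_neg hx]
      · rw [if_neg hxu, if_neg hxu]
    have hlmem : ℓ ∈ dom s := by rw [hdom]; exact Or.inr rfl
    have hdt : dom t = dom s := by
      ext x
      constructor
      · intro hx
        by_contra hxs
        have hxu : x ∉ dom u := by rwa [hdu]
        exact hx (by rw [hts x, if_neg hxu])
      · intro hxs
        have hxu : x ∈ dom u := by rwa [hdu]
        show t x ≠ none
        rw [hts x, if_pos hxu]
        by_cases hx : x = ℓ
        · simp [hx]
        · rw [if_neg hx]
          exact hxu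
    have htl : t ℓ = some (Sum.inr l') := by
      rw [hts ℓ, if_pos (show ℓ ∈ dom u by rw [hdu]; exact hlmem), if_pos rfl]
    have htw : restrictV t A.V = w := by
      funext x
      simp only [restrictV]
      by_cases hxv : x ∈ A.V
      · have hxs : x ∈ dom s := hVsub hxv
        have hxl : x ≠ ℓ := fun h => hfresh (h ▸ hxv)
        rw [if_pos hxv, hts x, if_pos (hdu ▸ hxs), if_neg hxl, hus x, if_pos hxs, if_pos hxv]
      · rw [if_neg hxv]
        have hxw : x ∉ dom w := by rw [hdw]; exact hxv
        exact (not_not.mp hxw).symm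
    have htmem : t ∈ taState A ℓ := by
      refine ⟨hdt.trans hdom, l', (hA.trLoc ht).2, htl, ?_⟩
      rw [htw]
      exact hinv'
    refine ⟨a.toAct, t, ?_⟩
    exact TATrans.act hs hl ht hg (iff_of_true rfl hK) htmem
  · rintro ⟨a, t, htr⟩
    cases htr with
    | act hs' hl' ht hg hb hmem =>
      have := hl.symm.trans hl'
      have hle := Sum.inr.inj (Option.some.inj this)
      rw [hle]
      exact hb.mp rfl

end TTSBpaper
end
end
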